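/- arXiv:2104.06315 — 2 statements merged into one kernel-verified Lean document; each statement's English description precedes it below -/
import Mathlib

section
/- Let H be Rayleigh distributed with density 2γe^{−γ²} on [0,∞), A uniform on {0,2}, and X arcsine distributed on (−1,1) with density 1/(π√(1−x²)), all independent. Then S = H·A·X has density f_S(s) = e^{−s²/4}/(4√π) on ℝ. -/
open Real Set MeasureTheory ProbabilityTheory
open scoped ENNReal

noncomputable def fH : ℝ → ℝ≥0∞ := fun γ =>
  ENNReal.ofReal ((Ici (0 : ℝ)).indicator (fun γ => 2 * γ * Real.exp (-γ ^ 2)) γ)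

noncomputable def fX : ℝ → ℝ≥0∞ := fun x =>
  ENNReal.ofReal ((Ioo (-1 : ℝ) 1).indicator (fun x => 1 / (π * Real.sqrt (1 - x ^ 2))) x)

noncomputable def fY : ℝ → ℝ≥0∞ := fun s => ENNReal.ofReal (Real.exp (-s ^ 2) / Real.sqrt π)

lemma fH_meas : Measurable fH := by
  unfold fH
  exact ENNReal.measurable_ofReal.comp (Measurable.indicator (by fun_prop) measurableSet_Ici)

lemma fX_meas : Measurable fX := by
  unfold fX
  exact ENNReal.measurable_ofReal.comp (Measurable.indicator (by fun_prop) measurableSet_Ioo)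

lemma fY_meas : Measurable fY := by unfold fY; fun_prop

lemma lintegral_image_eq_lintegral_abs_deriv_mul {s : Set ℝ} {f f' : ℝ → ℝ}
    (hs : MeasurableSet s) (hf' : ∀ x ∈ s, HasDerivWithinAt f (f' x) s x) (hf : InjOn f s)
    (g : ℝ → ℝ≥0∞) :
    ∫⁻ x in f '' s, g x = ∫⁻ x in s, ENNReal.ofReal |f' x| * g (f x) := by
  simpa only [ContinuousLinearMap.det_toSpanSingleton] using
    lintegral_image_eq_lintegral_abs_det_fderiv_mul volume hs
      (fun x hx => (hf' x hx).hasFDerivWithinAt) hf g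

lemma map_eq_withDensity {Ω : Type*} [MeasureSpace Ω] [IsProbabilityMeasure (ℙ : Measure Ω)]
    (V : Ω → ℝ) (hVm : Measurable V) (f : ℝ → ℝ≥0∞) (hf : Measurable f)
    (hpdf : pdf V ℙ volume =ᵐ[volume] f) (hmass : ∫⁻ x, f x = 1) :
    Measure.map V ℙ = volume.withDensity f := by
  have hprob : IsProbabilityMeasure (Measure.map V ℙ) :=
    Measure.isProbabilityMeasure_map hVm.aemeasurable
  have hdec := Measure.haveLebesgueDecomposition_add (Measure.map V ℙ) volume
  have hwd : volume.withDensity ((Measure.map V ℙ).rnDeriv volume) = volume.withDensity f :=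
    withDensity_congr_ae hpdf
  rw [hwd] at hdec
  have hmass2 : volume.withDensity f univ = 1 := by
    rw [withDensity_apply _ MeasurableSet.univ, Measure.restrict_univ, hmass]
  have hsing : (Measure.map V ℙ).singularPart volume = 0 := by
    have h1 : (Measure.map V ℙ) univ = 1 := measure_univ
    rw [hdec] at h1
    simp only [Measure.add_apply, hmass2] at h1
    have h2 : (Measure.map V ℙ).singularPart volume univ = 0 := by
      have h3 : (Measure.map V ℙ).singularPart volume univ
          = (Measure.map V ℙ).singularPart volume univ + 1 - 1 :=
        (ENNReal.add_sub_cancel_right ENNReal.one_ne_top).symm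
      rw [h3, h1]
      simp
    exact Measure.measure_univ_eq_zero.mp h2
  rw [hdec, hsing, zero_add]

lemma setLIntegral_preimage_scale (f : ℝ → ℝ≥0∞) {c : ℝ} (hc : 0 < c) (E : Set ℝ)
    (hE : MeasurableSet E) :
    ∫⁻ x in (fun x => c * x) ⁻¹' E, f x = ∫⁻ y in E, ENNReal.ofReal (1/c) * f (y/c) := by
  have hs : MeasurableSet ((fun x => c * x) ⁻¹' E) := (measurable_const_mul c) hE
  have himg : (fun x => c * x) '' ((fun x => c * x) ⁻¹' E) = E :=
    Set.image_preimage_eq E (mul_left_surjective₀ hc.ne')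
  have hd : ∀ x : ℝ, HasDerivAt (fun x => c * x) c x := fun x => by
    simpa using (hasDerivAt_id x).const_mul c
  have key := _root_.lintegral_image_eq_lintegral_abs_deriv_mul hs
    (fun x _ => (hd x).hasDerivWithinAt)
    (fun a _ b _ h => mul_left_cancel₀ hc.ne' h)
    (fun y => ENNReal.ofReal (1/c) * f (y/c))
  rw [himg] at key
  rw [key]
  apply setLIntegral_congr_fun hs
  intro x _
  beta_reduce
  rw [mul_div_cancel_left₀ _ hc.ne', ← mul_assoc, ← ENNReal.ofReal_mul (abs_nonneg c),
    abs_of_pos hc, mul_one_div_cancel hc.ne', ENNReal.ofReal_one, one_mul]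

lemma fH_mass : ∫⁻ γ, fH γ = 1 := by
  have h1 : fH = (Ici (0:ℝ)).indicator (fun γ => ENNReal.ofReal (2 * γ * Real.exp (-γ ^ 2))) := by
    funext γ
    unfold fH
    by_cases h : γ ∈ Ici (0:ℝ) <;> simp [Set.indicator_apply, h]
  rw [h1, lintegral_indicator measurableSet_Ici _,
    ← Measure.restrict_congr_set Ioi_ae_eq_Ici]
  have himage : Real.sqrt '' Ioi 0 = Ioi 0 := by
    ext y
    constructor
    · rintro ⟨u, hu, rfl⟩
      exact Real.sqrt_pos.mpr hu
    · intro hy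
      exact ⟨y^2, by simpa using pow_pos hy 2, Real.sqrt_sq hy.le⟩
  rw [← himage, _root_.lintegral_image_eq_lintegral_abs_deriv_mul measurableSet_Ioi
    (fun u hu => (Real.hasDerivAt_sqrt (ne_of_gt hu)).hasDerivWithinAt)
    (fun a ha b hb h => by
      have := congrArg (· ^ 2) h
      simpa [Real.sq_sqrt (le_of_lt ha), Real.sq_sqrt (le_of_lt hb)] using this)]
  have hcongr : ∀ u ∈ Ioi (0:ℝ),
      ENNReal.ofReal |1 / (2 * Real.sqrt u)| *
        ENNReal.ofReal (2 * Real.sqrt u * Real.exp (-Real.sqrt u ^ 2))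
      = ENNReal.ofReal (Real.exp (-u)) := by
    intro u hu
    have hsu : 0 < Real.sqrt u := Real.sqrt_pos.mpr hu
    rw [Real.sq_sqrt hu.le, abs_of_pos (by positivity), ← ENNReal.ofReal_mul (by positivity)]
    congr 1
    field_simp
  rw [setLIntegral_congr_fun measurableSet_Ioi hcongr]
  rw [← ofReal_integral_eq_lintegral_ofReal
    (show Integrable (fun u : ℝ => Real.exp (-u)) (volume.restrict (Ioi 0)) from
      (by simpa using exp_neg_integrableOn_Ioi 0 (by norm_num : (0:ℝ) < 1) :
        IntegrableOn (fun u => Real.exp (-u)) (Ioi 0) volume))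
    (Filter.Eventually.of_forall fun u => (Real.exp_pos _).le)]
  rw [integral_exp_neg_Ioi_zero, ENNReal.ofReal_one]

lemma sin_image : Real.sin '' Ioo (-(π/2)) (π/2) = Ioo (-1 : ℝ) 1 := by
  ext y
  constructor
  · rintro ⟨θ, hθ, rfl⟩
    constructor
    · have := Real.strictMonoOn_sin ⟨le_refl _, by linarith [Real.pi_pos]⟩
        ⟨hθ.1.le, hθ.2.le⟩ hθ.1
      simpa using this
    · have := Real.strictMonoOn_sin ⟨hθ.1.le, hθ.2.le⟩
        ⟨by linarith [Real.pi_pos], le_refl _⟩ hθ.2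
      simpa using this
  · intro hy
    refine ⟨Real.arcsin y, ⟨?_, Real.arcsin_lt_pi_div_two.mpr hy.2⟩,
      Real.sin_arcsin hy.1.le hy.2.le⟩
    exact Real.neg_pi_div_two_lt_arcsin.mpr hy.1

lemma fX_mass : ∫⁻ x, fX x = 1 := by
  have h1 : fX = (Ioo (-1:ℝ) 1).indicator
      (fun x => ENNReal.ofReal (1 / (π * Real.sqrt (1 - x ^ 2)))) := by
    funext x
    unfold fX
    by_cases h : x ∈ Ioo (-1:ℝ) 1 <;> simp [Set.indicator_apply, h]
  rw [h1, lintegral_indicator measurableSet_Ioo _, ← sin_image,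
    _root_.lintegral_image_eq_lintegral_abs_deriv_mul measurableSet_Ioo
      (fun θ _ => (Real.hasDerivAt_sin θ).hasDerivWithinAt)
      (Real.injOn_sin.mono (Ioo_subset_Icc_self))]
  have hcongr : ∀ θ ∈ Ioo (-(π/2)) (π/2),
      ENNReal.ofReal |Real.cos θ| * ENNReal.ofReal (1 / (π * Real.sqrt (1 - Real.sin θ ^ 2)))
      = ENNReal.ofReal (1/π) := by
    intro θ hθ
    have hc : 0 < Real.cos θ := Real.cos_pos_of_mem_Ioo hθ
    have h2 : 1 - Real.sin θ ^ 2 = Real.cos θ ^ 2 := by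
      have := Real.sin_sq_add_cos_sq θ; linarith
    rw [h2, Real.sqrt_sq hc.le, abs_of_pos hc, ← ENNReal.ofReal_mul hc.le]
    congr 1
    field_simp
  rw [setLIntegral_congr_fun measurableSet_Ioo hcongr]
  rw [setLIntegral_const, Real.volume_Ioo]
  rw [← ENNReal.ofReal_mul (by positivity)]
  have : π / 2 - -(π/2) = π := by ring
  rw [this, one_div, inv_mul_cancel₀ Real.pi_ne_zero, ENNReal.ofReal_one]

lemma key_integral (s : ℝ) :
    ∫⁻ γ in Ioi (0:ℝ), fH γ * fX (s/γ) * ENNReal.ofReal (1/γ) = fY s := by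
  have step1 : ∀ γ ∈ Ioi (0:ℝ),
      fH γ * fX (s/γ) * ENNReal.ofReal (1/γ)
      = (Ioi |s|).indicator
          (fun γ => ENNReal.ofReal (2 * γ * Real.exp (-γ^2) / (π * Real.sqrt (γ^2 - s^2)))) γ := by
    intro γ hγ
    have hγ0 : (0:ℝ) < γ := hγ
    have hfH : fH γ = ENNReal.ofReal (2 * γ * Real.exp (-γ^2)) := by
      unfold fH
      rw [Set.indicator_of_mem (show γ ∈ Ici (0:ℝ) from hγ0.le)]
    by_cases h : |s| < γ
    · have hmem : s/γ ∈ Ioo (-1:ℝ) 1 := by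
        constructor
        · rw [neg_lt, ← neg_div]
          exact (div_lt_one hγ0).mpr (lt_of_le_of_lt (neg_le_abs s) h)
        · exact (div_lt_one hγ0).mpr (lt_of_le_of_lt (le_abs_self s) h)
      have hfX : fX (s/γ) = ENNReal.ofReal (1 / (π * Real.sqrt (1 - (s/γ)^2))) := by
        unfold fX
        rw [Set.indicator_of_mem (show s/γ ∈ Ioo (-1:ℝ) 1 from hmem)]
      rw [Set.indicator_of_mem (show γ ∈ Ioi |s| from h), hfH, hfX,
        ← ENNReal.ofReal_mul (by positivity), ← ENNReal.ofReal_mul (by positivity)]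
      congr 1
      have hlt : s^2 < γ^2 := by
        have := sq_abs s ▸ pow_lt_pow_left₀ h (abs_nonneg s) (two_ne_zero)
        linarith
      have hsq : Real.sqrt (1 - (s/γ)^2) = Real.sqrt (γ^2 - s^2) / γ := by
        rw [show (1 : ℝ) - (s/γ)^2 = (γ^2 - s^2)/γ^2 by field_simp,
          Real.sqrt_div (by linarith) _, Real.sqrt_sq hγ0.le]
      rw [hsq]
      have hpos : 0 < Real.sqrt (γ^2 - s^2) := Real.sqrt_pos.mpr (by linarith)
      field_simp
    · have hnot : s/γ ∉ Ioo (-1:ℝ) 1 := by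
        intro hmem
        apply h
        have h2 : |s/γ| < 1 := abs_lt.mpr ⟨hmem.1, hmem.2⟩
        rw [abs_div, abs_of_pos hγ0] at h2
        exact (div_lt_one hγ0).mp h2
      have hfX : fX (s/γ) = 0 := by
        unfold fX
        rw [Set.indicator_of_notMem (show s/γ ∉ Ioo (-1:ℝ) 1 from hnot), ENNReal.ofReal_zero]
      rw [Set.indicator_of_notMem (show γ ∉ Ioi |s| from h), hfX, mul_zero, zero_mul]
  rw [setLIntegral_congr_fun measurableSet_Ioi step1]
  rw [lintegral_indicator measurableSet_Ioi _, Measure.restrict_restrict measurableSet_Ioi,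
    Set.inter_eq_left.mpr (Ioi_subset_Ioi (abs_nonneg s))]
  have himage : (fun u => Real.sqrt (u + s^2)) '' Ioi 0 = Ioi |s| := by
    ext y
    constructor
    · rintro ⟨u, hu, rfl⟩
      have : Real.sqrt (s^2) < Real.sqrt (u + s^2) :=
        Real.sqrt_lt_sqrt (sq_nonneg s) (by linarith [mem_Ioi.mp hu])
      rwa [Real.sqrt_sq_eq_abs] at this
    · intro hy
      have hy' : |s| < y := hy
      have h0y : 0 ≤ y := (abs_nonneg s).trans hy'.le
      have hlt : s^2 < y^2 := by
        have := sq_abs s ▸ pow_lt_pow_left₀ hy' (abs_nonneg s) (two_ne_zero)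
        linarith
      refine ⟨y^2 - s^2, by simpa using hlt, ?_⟩
      show Real.sqrt (y^2 - s^2 + s^2) = y
      rw [show y^2 - s^2 + s^2 = y^2 by ring, Real.sqrt_sq h0y]
  rw [← himage, _root_.lintegral_image_eq_lintegral_abs_deriv_mul measurableSet_Ioi
    (fun u hu => by
      have h1 : HasDerivAt (fun u : ℝ => u + s^2) 1 u := (hasDerivAt_id u).add_const _
      have h2 : (0:ℝ) < u + s^2 := by have := mem_Ioi.mp hu; positivity
      have h3 : HasDerivAt (fun u : ℝ => Real.sqrt (u + s^2))
          (1 / (2 * Real.sqrt (u + s^2))) u := by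
        simpa using h1.sqrt h2.ne'
      exact h3.hasDerivWithinAt)
    (fun a ha b hb hab => by
      have ha' : (0:ℝ) ≤ a + s^2 := by have := mem_Ioi.mp ha; positivity
      have hb' : (0:ℝ) ≤ b + s^2 := by have := mem_Ioi.mp hb; positivity
      have := congrArg (· ^ 2) hab
      simp only [Real.sq_sqrt ha', Real.sq_sqrt hb'] at this
      linarith)]
  have step5 : ∀ u ∈ Ioi (0:ℝ),
      ENNReal.ofReal |1 / (2 * Real.sqrt (u + s^2))| *
        ENNReal.ofReal (2 * Real.sqrt (u + s^2) * Real.exp (-Real.sqrt (u + s^2)^2) /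
          (π * Real.sqrt (Real.sqrt (u + s^2)^2 - s^2)))
      = ENNReal.ofReal (Real.exp (-s^2) / π) *
          ENNReal.ofReal (Real.exp (-u) * u ^ ((1/2:ℝ) - 1)) := by
    intro u hu
    have hu0 : (0:ℝ) < u := hu
    have hus : (0:ℝ) < u + s^2 := by positivity
    have ha : 0 < Real.sqrt (u + s^2) := Real.sqrt_pos.mpr hus
    rw [Real.sq_sqrt hus.le, abs_of_pos (by positivity), ← ENNReal.ofReal_mul (by positivity),
      ← ENNReal.ofReal_mul (by positivity)]
    congr 1
    have hru : u ^ ((1/2:ℝ) - 1) = (Real.sqrt u)⁻¹ := by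
      rw [show (1/2:ℝ) - 1 = -(1/2:ℝ) by norm_num, Real.rpow_neg hu0.le, ← Real.sqrt_eq_rpow]
    have hsu : 0 < Real.sqrt u := Real.sqrt_pos.mpr hu0
    rw [hru, show u + s^2 - s^2 = u by ring,
      show -(u + s^2) = -u + -s^2 by ring, Real.exp_add]
    field_simp
  rw [setLIntegral_congr_fun measurableSet_Ioi step5,
    lintegral_const_mul _ (by fun_prop)]
  have hGamma : ∫⁻ u in Ioi (0:ℝ), ENNReal.ofReal (Real.exp (-u) * u ^ ((1/2:ℝ) - 1))
      = ENNReal.ofReal (Real.sqrt π) := by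
    rw [← ofReal_integral_eq_lintegral_ofReal
      (Real.GammaIntegral_convergent (by norm_num : (0:ℝ) < 1/2))
      ((ae_restrict_iff' measurableSet_Ioi).mpr (Filter.Eventually.of_forall
        (fun u hu => by
          have : (0:ℝ) < u := hu
          positivity))),
      ← Real.Gamma_eq_integral (by norm_num : (0:ℝ) < 1/2), Real.Gamma_one_half_eq]
  rw [hGamma, ← ENNReal.ofReal_mul (by positivity)]
  unfold fY
  congr 1
  have hπ : 0 < Real.sqrt π := Real.sqrt_pos.mpr Real.pi_pos
  have hππ : Real.sqrt π * Real.sqrt π = π := Real.mul_self_sqrt Real.pi_pos.le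
  rw [div_mul_eq_mul_div, div_eq_div_iff Real.pi_pos.ne' hπ.ne', mul_assoc, hππ]

lemma map_mul_prod :
    Measure.map (fun p : ℝ × ℝ => p.1 * p.2)
      ((volume.withDensity fH).prod (volume.withDensity fX)) = volume.withDensity fY := by
  ext E hE
  rw [Measure.map_apply measurable_mul hE, Measure.prod_apply (measurable_mul hE)]
  have hsec : ∀ γ : ℝ, Prod.mk γ ⁻¹' ((fun p : ℝ × ℝ => p.1 * p.2) ⁻¹' E)
      = (fun x => γ * x) ⁻¹' E := fun γ => rfl
  have hmeas_sec : Measurable fun γ : ℝ =>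
      (volume.withDensity fX) (Prod.mk γ ⁻¹' ((fun p : ℝ × ℝ => p.1 * p.2) ⁻¹' E)) :=
    measurable_measure_prodMk_left (measurable_mul hE)
  rw [lintegral_withDensity_eq_lintegral_mul _ fH_meas hmeas_sec]
  have h0 : ∀ᵐ γ : ℝ, γ ≠ 0 := by
    rw [ae_iff]
    simp only [ne_eq, not_not, Set.setOf_eq_eq_singleton]
    exact volume_singleton
  have step : ∀ᵐ γ : ℝ, fH γ *
        (volume.withDensity fX) (Prod.mk γ ⁻¹' ((fun p : ℝ × ℝ => p.1 * p.2) ⁻¹' E))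
      = (Ioi (0:ℝ)).indicator
          (fun γ => ∫⁻ y in E, fH γ * (ENNReal.ofReal (1/γ) * fX (y/γ))) γ := by
    filter_upwards [h0] with γ hγ
    rcases lt_or_gt_of_ne hγ with hneg | hpos
    · have hfH0 : fH γ = 0 := by
        unfold fH
        rw [Set.indicator_of_notMem (show γ ∉ Ici (0:ℝ) from not_le.mpr hneg),
          ENNReal.ofReal_zero]
      rw [hfH0, zero_mul, Set.indicator_of_notMem (show γ ∉ Ioi (0:ℝ) from not_lt.mpr hneg.le)]
    · rw [Set.indicator_of_mem (show γ ∈ Ioi (0:ℝ) from hpos), hsec γ,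
        withDensity_apply _ ((measurable_const_mul γ) hE),
        setLIntegral_preimage_scale fX hpos E hE]
      exact (lintegral_const_mul _
        (measurable_const.mul (fX_meas.comp (measurable_id.div_const γ)))).symm
  simp only [Pi.mul_apply]
  rw [lintegral_congr_ae step, lintegral_indicator measurableSet_Ioi _]
  have swap : ∫⁻ γ in Ioi (0:ℝ), ∫⁻ y in E, fH γ * (ENNReal.ofReal (1/γ) * fX (y/γ))
      = ∫⁻ y in E, ∫⁻ γ in Ioi (0:ℝ), fH γ * (ENNReal.ofReal (1/γ) * fX (y/γ)) := by
    apply lintegral_lintegral_swap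
    apply Measurable.aemeasurable
    show Measurable (fun p : ℝ × ℝ => fH p.1 * (ENNReal.ofReal (1 / p.1) * fX (p.2 / p.1)))
    refine Measurable.mul (f := fun p : ℝ × ℝ => fH p.1)
      (g := fun p : ℝ × ℝ => ENNReal.ofReal (1 / p.1) * fX (p.2 / p.1)) ?_ ?_
    · exact fH_meas.comp measurable_fst
    · refine Measurable.mul (f := fun p : ℝ × ℝ => ENNReal.ofReal (1 / p.1))
        (g := fun p : ℝ × ℝ => fX (p.2 / p.1)) ?_ ?_
      · exact ENNReal.measurable_ofReal.comp (measurable_const.div measurable_fst)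
      · exact fX_meas.comp (measurable_snd.div measurable_fst)
  rw [swap, withDensity_apply _ hE]
  apply setLIntegral_congr_fun hE
  intro y _
  rw [← key_integral y]
  apply lintegral_congr
  intro γ
  ring

lemma prod_smul_right {α β : Type*} [MeasurableSpace α] [MeasurableSpace β]
    (ν : Measure α) (μ₁ : Measure β) [SFinite ν] [SFinite μ₁] (c : ℝ≥0∞) (hc : c ≠ ∞) :
    ν.prod (c • μ₁) = c • ν.prod μ₁ := by
  haveI h : SFinite (c • μ₁) := by rw [← withDensity_const]; infer_instance
  ext s hs
  rw [Measure.prod_apply hs, Measure.smul_apply, smul_eq_mul, Measure.prod_apply hs,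
    ← lintegral_const_mul' _ _ hc]
  simp [Measure.smul_apply]

lemma map_two_smul :
    Measure.map (fun x : ℝ => 2 * x) (volume.withDensity fY)
      = volume.withDensity (fun y => ENNReal.ofReal (1/2) * fY (y/2)) := by
  ext E hE
  rw [Measure.map_apply (measurable_const_mul 2) hE,
    withDensity_apply _ ((measurable_const_mul 2) hE),
    setLIntegral_preimage_scale fY (by norm_num) E hE, withDensity_apply _ hE]

/-- If `H` is Rayleigh (density `2γe^{−γ²}` on `[0,∞)`), `A` is uniform on `{0,2}`,
`X` is arcsine on `(−1,1)`, and `H, A, X` are independent, then `S = H·A·X` has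
density `e^{−s²/4}/(4√π)` on `ℝ`. -/
theorem density_of_HAX {Ω : Type*} [MeasureSpace Ω] [IsProbabilityMeasure (ℙ : Measure Ω)]
    (H A X : Ω → ℝ) (hHm : Measurable H) (hAm : Measurable A) (hXm : Measurable X)
    (hindep : iIndepFun ![H, A, X] ℙ)
    (hH : pdf H ℙ volume =ᵐ[volume] fun γ =>
      ENNReal.ofReal ((Ici (0 : ℝ)).indicator (fun γ => 2 * γ * Real.exp (-γ ^ 2)) γ))
    (hA : Measure.map A ℙ = (2 : ℝ≥0∞)⁻¹ • (Measure.dirac 0 + Measure.dirac 2))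
    (hX : pdf X ℙ volume =ᵐ[volume] fun x =>
      ENNReal.ofReal ((Ioo (-1 : ℝ) 1).indicator (fun x => 1 / (π * Real.sqrt (1 - x ^ 2))) x)) :
    pdf (fun ω => H ω * A ω * X ω) ℙ volume =ᵐ[volume] fun s =>
      ENNReal.ofReal (Real.exp (-s ^ 2 / 4) / (4 * Real.sqrt π)) := by
  set gS : ℝ → ℝ≥0∞ := fun s => ENNReal.ofReal (Real.exp (-s ^ 2 / 4) / (4 * Real.sqrt π))
    with hgS
  have hmapH : Measure.map H ℙ = volume.withDensity fH :=
    map_eq_withDensity H hHm fH fH_meas hH fH_mass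
  have hmapX : Measure.map X ℙ = volume.withDensity fX :=
    map_eq_withDensity X hXm fX fX_meas hX fX_mass
  have hHX : IndepFun H X ℙ := by
    simpa using hindep.indepFun (show (0 : Fin 3) ≠ 2 by decide)
  have hYmap : Measure.map (fun ω => H ω * X ω) ℙ = volume.withDensity fY := by
    have hpair := (indepFun_iff_map_prod_eq_prod_map_map hHm.aemeasurable hXm.aemeasurable).mp hHX
    have hcomp : (fun ω => H ω * X ω)
        = (fun p : ℝ × ℝ => p.1 * p.2) ∘ (fun ω => (H ω, X ω)) := rfl
    rw [hcomp, ← Measure.map_map measurable_mul (hHm.prodMk hXm), hpair, hmapH, hmapX,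
      map_mul_prod]
  have hYprob : IsProbabilityMeasure (Measure.map (fun ω => H ω * X ω) ℙ) :=
    Measure.isProbabilityMeasure_map (hHm.mul hXm).aemeasurable
  have hYuniv : (volume.withDensity fY) univ = 1 := by
    rw [← hYmap]; exact measure_univ
  have hYA : IndepFun (fun ω => H ω * X ω) A ℙ := by
    have hmeas : ∀ i, Measurable (![H, A, X] i) := by
      intro i; fin_cases i <;> simpa
    have := hindep.indepFun_mul_left hmeas 0 2 1 (by decide) (by decide)
    simpa [Pi.mul_def] using this
  have hSfun : (fun ω => H ω * A ω * X ω)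
      = (fun p : ℝ × ℝ => p.1 * p.2) ∘ (fun ω => ((H ω * X ω), A ω)) := by
    funext ω; show H ω * A ω * X ω = (H ω * X ω) * A ω; ring
  have hmapS : Measure.map (fun ω => H ω * A ω * X ω) ℙ
      = (2 : ℝ≥0∞)⁻¹ • Measure.dirac 0 + volume.withDensity gS := by
    rw [hSfun, ← Measure.map_map measurable_mul (Measurable.prodMk (f := fun ω => H ω * X ω) (hHm.mul hXm) hAm),
      (indepFun_iff_map_prod_eq_prod_map_map (f := fun ω => H ω * X ω) (hHm.mul hXm).aemeasurable hAm.aemeasurable).mp hYA,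
      hYmap, hA,
      prod_smul_right _ _ _ (by simp), Measure.prod_add,
      Measure.map_smul, Measure.map_add _ _ measurable_mul]
    rw [Measure.prod_dirac, Measure.prod_dirac,
      Measure.map_map measurable_mul (measurable_prodMk_right),
      Measure.map_map measurable_mul (measurable_prodMk_right)]
    have hzero : ((fun p : ℝ × ℝ => p.1 * p.2) ∘ fun x : ℝ => (x, (0:ℝ))) = fun _ => (0:ℝ) := by
      funext x; simp
    have htwo : ((fun p : ℝ × ℝ => p.1 * p.2) ∘ fun x : ℝ => (x, (2:ℝ))) =
        fun x : ℝ => 2 * x := by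
      funext x; show x * 2 = 2 * x; ring
    rw [hzero, htwo, Measure.map_const, hYuniv, one_smul, map_two_smul]
    have hdens : ((2 : ℝ≥0∞)⁻¹ • fun y => ENNReal.ofReal (1/2) * fY (y/2) : ℝ → ℝ≥0∞)
        = gS := by
      funext y
      rw [Pi.smul_apply, smul_eq_mul]
      have h2 : (2 : ℝ≥0∞)⁻¹ = ENNReal.ofReal (1/2) := by
        rw [one_div, ENNReal.ofReal_inv_of_pos two_pos]
        norm_num
      show (2 : ℝ≥0∞)⁻¹ * (ENNReal.ofReal (1/2) * fY (y/2)) = gS y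
      rw [h2, hgS]
      unfold fY
      rw [← ENNReal.ofReal_mul (by norm_num), ← ENNReal.ofReal_mul (by positivity)]
      congr 1
      rw [show -(y/2)^2 = -y^2/4 by ring]
      have hπ : 0 < Real.sqrt π := Real.sqrt_pos.mpr Real.pi_pos
      field_simp
      ring
    rw [smul_add, ← withDensity_smul' _ _ (by simp), hdens]
  have hsing : ((2 : ℝ≥0∞)⁻¹ • Measure.dirac (0:ℝ)) ⟂ₘ (volume : Measure ℝ) := by
    refine ⟨{(0:ℝ)}ᶜ, (measurableSet_singleton 0).compl, ?_, ?_⟩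
    · simp [Measure.smul_apply, Measure.dirac_apply' _ (measurableSet_singleton 0).compl]
    · simp
  have := Measure.eq_rnDeriv (μ := Measure.map (fun ω => H ω * A ω * X ω) ℙ)
    (ν := volume) (f := gS)
    (by rw [hgS]; fun_prop) hsing hmapS
  exact (this.symm : pdf (fun ω => H ω * A ω * X ω) ℙ volume =ᵐ[volume] gS)
end

section
/- If H is Rayleigh with density 2γe^{−γ²} on [0,∞) and s > 0 is fixed, then ∫_{s/2}^{∞} (γe^{−γ²})/(π√(4γ² − s²)) dγ = e^{−s²/4}/(4√π). -/
open Real Set MeasureTheory Filter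

lemma uncond_aux_integrable (s : ℝ) (hs : 0 < s) :
    IntegrableOn (fun γ : ℝ => γ * Real.exp (-γ ^ 2) / (π * Real.sqrt (4 * γ ^ 2 - s ^ 2)))
      (Ioi (s / 2)) := by
  set h : ℝ → ℝ := fun γ => γ * Real.exp (-γ ^ 2) / (π * Real.sqrt (4 * γ ^ 2 - s ^ 2)) with hh
  have hmeas : ∀ t : Set ℝ, AEStronglyMeasurable h (volume.restrict t) := by
    intro t
    apply Measurable.aestronglyMeasurable
    fun_prop
  have hsplit : Ioo (s / 2) s ∪ Ici s = Ioi (s / 2) := Ioo_union_Ici_eq_Ioi (by linarith)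
  rw [← hsplit]
  apply IntegrableOn.union
  · -- near s/2 : dominate by C * (γ - s/2)^(-1/2)
    have hdom : IntegrableOn (fun γ : ℝ => Real.sqrt s / (2 * π) * (γ - s / 2) ^ (-(1/2) : ℝ))
        (Ioo (s / 2) s) := by
      have h1 : IntervalIntegrable (fun x : ℝ => x ^ (-(1/2) : ℝ)) volume 0 (s / 2) :=
        intervalIntegral.intervalIntegrable_rpow' (by norm_num)
      have h2 : IntervalIntegrable (fun x : ℝ => (x - s / 2) ^ (-(1/2) : ℝ)) volume
          (0 + s / 2) (s / 2 + s / 2) := h1.comp_sub_right (s / 2)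
      have h3 : IntegrableOn (fun x : ℝ => (x - s / 2) ^ (-(1/2) : ℝ)) (Ioc (s / 2) s) := by
        have := (intervalIntegrable_iff_integrableOn_Ioc_of_le (by linarith)).mp
          (by simpa [add_halves] using h2 : IntervalIntegrable
            (fun x : ℝ => (x - s / 2) ^ (-(1/2) : ℝ)) volume (s / 2) s)
        exact this
      exact ((h3.mono_set Ioo_subset_Ioc_self).const_mul _)
    refine hdom.mono' (hmeas _) ?_
    filter_upwards [ae_restrict_mem measurableSet_Ioo] with γ hγ
    obtain ⟨hγ1, hγ2⟩ := hγ
    have hγ0 : 0 < γ := by linarith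
    have ht : 0 < 4 * γ ^ 2 - s ^ 2 := by nlinarith
    have hsqt : 0 < Real.sqrt (4 * γ ^ 2 - s ^ 2) := Real.sqrt_pos.mpr ht
    have hnn : 0 ≤ h γ := by
      apply div_nonneg (by positivity) (by positivity)
    rw [Real.norm_eq_abs, abs_of_nonneg hnn]
    have hd : 0 < γ - s / 2 := by linarith
    have hrw : (γ - s / 2) ^ (-(1/2) : ℝ) = (Real.sqrt (γ - s / 2))⁻¹ := by
      rw [Real.rpow_neg hd.le, ← Real.sqrt_eq_rpow]
    rw [hrw]
    set A := Real.sqrt (γ - s / 2) with hA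
    have hApos : 0 < A := Real.sqrt_pos.mpr hd
    have hspos : 0 < Real.sqrt s := Real.sqrt_pos.mpr hs
    have hT : 2 * Real.sqrt s * A ≤ Real.sqrt (4 * γ ^ 2 - s ^ 2) := by
      have h4 : Real.sqrt (4 * s * (γ - s / 2)) = 2 * Real.sqrt s * A := by
        rw [show 4 * s * (γ - s / 2) = (2 * Real.sqrt s * A) ^ 2 by
          rw [mul_pow, mul_pow, Real.sq_sqrt hs.le, Real.sq_sqrt hd.le]; ring]
        exact Real.sqrt_sq (by positivity)
      rw [← h4]
      exact Real.sqrt_le_sqrt (by nlinarith)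
    have hnum : γ * Real.exp (-γ ^ 2) ≤ s := by
      have he : Real.exp (-γ ^ 2) ≤ 1 := Real.exp_le_one_iff.mpr (by nlinarith)
      nlinarith [Real.exp_pos (-γ ^ 2)]
    have hstep : h γ ≤ s / (π * (2 * Real.sqrt s * A)) := by
      apply div_le_div₀ hs.le hnum (by positivity)
      exact mul_le_mul_of_nonneg_left hT pi_pos.le
    refine hstep.trans_eq ?_
    field_simp
    linear_combination (-1 : ℝ) * (Real.sq_sqrt hs.le)
  · -- tail : dominate by exp(-γ²)/π
    have hdom : IntegrableOn (fun γ : ℝ => (1 / π) * Real.exp (-1 * γ ^ 2)) (Ici s) :=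
      ((integrable_exp_neg_mul_sq one_pos).const_mul _).integrableOn
    refine hdom.mono' (hmeas _) ?_
    filter_upwards [ae_restrict_mem measurableSet_Ici] with γ hγ
    have hγs : s ≤ γ := hγ
    have hγ0 : 0 < γ := lt_of_lt_of_le hs hγs
    have ht : 0 < 4 * γ ^ 2 - s ^ 2 := by nlinarith
    have hsqt : 0 < Real.sqrt (4 * γ ^ 2 - s ^ 2) := Real.sqrt_pos.mpr ht
    have hnn : 0 ≤ h γ := div_nonneg (by positivity) (by positivity)
    rw [Real.norm_eq_abs, abs_of_nonneg hnn]
    have hge : γ ≤ Real.sqrt (4 * γ ^ 2 - s ^ 2) := by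
      rw [Real.le_sqrt hγ0.le (by nlinarith)]
      nlinarith
    have hle : γ * Real.exp (-γ ^ 2) ≤ Real.sqrt (4 * γ ^ 2 - s ^ 2) * Real.exp (-γ ^ 2) :=
      mul_le_mul_of_nonneg_right hge (Real.exp_pos _).le
    calc h γ ≤ Real.sqrt (4 * γ ^ 2 - s ^ 2) * Real.exp (-γ ^ 2) /
          (π * Real.sqrt (4 * γ ^ 2 - s ^ 2)) := by
          exact div_le_div_of_nonneg_right hle (by positivity) |>.trans_eq rfl
      _ = (1 / π) * Real.exp (-1 * γ ^ 2) := by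
          field_simp

/-- The unconditioning integral for the density of the correlator output with `β = 1`:
for fixed `s > 0`, `∫_{s/2}^∞ γe^{−γ²}/(π√(4γ²−s²)) dγ = e^{−s²/4}/(4√π)`. -/
theorem unconditioning_integral (s : ℝ) (hs : 0 < s) :
    (∫ γ in Ioi (s / 2), γ * Real.exp (-γ ^ 2) / (π * Real.sqrt (4 * γ ^ 2 - s ^ 2)))
      = Real.exp (-s ^ 2 / 4) / (4 * Real.sqrt π) := by
  set f : ℝ → ℝ := fun γ => Real.sqrt (4 * γ ^ 2 - s ^ 2) / 2 with hf_def
  set f' : ℝ → ℝ := fun γ => 2 * γ / Real.sqrt (4 * γ ^ 2 - s ^ 2) with hf'_def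
  set g : ℝ → ℝ := fun u => Real.exp (-s ^ 2 / 4) / (2 * π) * Real.exp (-1 * u ^ 2) with hg_def
  have hEq : ∀ γ ∈ Ioi (s / 2),
      γ * Real.exp (-γ ^ 2) / (π * Real.sqrt (4 * γ ^ 2 - s ^ 2)) = (g ∘ f) γ * f' γ := by
    intro γ hγ
    have hγ1 : s / 2 < γ := hγ
    have hγ0 : 0 < γ := by linarith
    have ht : 0 < 4 * γ ^ 2 - s ^ 2 := by nlinarith
    have hsqt : 0 < Real.sqrt (4 * γ ^ 2 - s ^ 2) := Real.sqrt_pos.mpr ht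
    have hsq : Real.sqrt (4 * γ ^ 2 - s ^ 2) ^ 2 = 4 * γ ^ 2 - s ^ 2 := Real.sq_sqrt ht.le
    simp only [Function.comp_apply, hg_def, hf_def, hf'_def]
    have key : Real.exp (-s ^ 2 / 4) *
        Real.exp (-1 * (Real.sqrt (4 * γ ^ 2 - s ^ 2) / 2) ^ 2) = Real.exp (-γ ^ 2) := by
      rw [← Real.exp_add]
      congr 1
      rw [div_pow, hsq]
      ring
    calc γ * Real.exp (-γ ^ 2) / (π * Real.sqrt (4 * γ ^ 2 - s ^ 2))
        = Real.exp (-γ ^ 2) * (γ / (π * Real.sqrt (4 * γ ^ 2 - s ^ 2))) := by ring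
      _ = (Real.exp (-s ^ 2 / 4) *
            Real.exp (-1 * (Real.sqrt (4 * γ ^ 2 - s ^ 2) / 2) ^ 2)) *
            (γ / (π * Real.sqrt (4 * γ ^ 2 - s ^ 2))) := by rw [key]
      _ = Real.exp (-s ^ 2 / 4) / (2 * π) *
            Real.exp (-1 * (Real.sqrt (4 * γ ^ 2 - s ^ 2) / 2) ^ 2) *
            (2 * γ / Real.sqrt (4 * γ ^ 2 - s ^ 2)) := by ring
  rw [setIntegral_congr_fun measurableSet_Ioi hEq]
  have hf_cont : ContinuousOn f (Ici (s / 2)) := by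
    apply Continuous.continuousOn
    fun_prop
  have hft : Tendsto f atTop atTop := by
    apply tendsto_atTop_mono' atTop (show ∀ᶠ γ in atTop, γ / 2 ≤ f γ from ?_)
    · exact Tendsto.atTop_div_const two_pos tendsto_id
    · filter_upwards [eventually_ge_atTop s] with γ hγ
      have hγ0 : 0 < γ := lt_of_lt_of_le hs hγ
      have hge : γ ≤ Real.sqrt (4 * γ ^ 2 - s ^ 2) := by
        rw [Real.le_sqrt hγ0.le (by nlinarith)]
        nlinarith
      simp only [hf_def]
      linarith
  have hff' : ∀ γ ∈ Ioi (s / 2), HasDerivWithinAt f (f' γ) (Ioi γ) γ := by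
    intro γ hγ
    have hγ1 : s / 2 < γ := hγ
    have hγ0 : 0 < γ := by linarith
    have ht : 0 < 4 * γ ^ 2 - s ^ 2 := by nlinarith
    have hsqt : 0 < Real.sqrt (4 * γ ^ 2 - s ^ 2) := Real.sqrt_pos.mpr ht
    have h1 : HasDerivAt (fun γ : ℝ => 4 * γ ^ 2 - s ^ 2) (8 * γ) γ := by
      have := ((hasDerivAt_pow 2 γ).const_mul 4).sub_const (s ^ 2)
      simpa using this.congr_deriv (by ring)
    have h2 : HasDerivAt (fun γ : ℝ => Real.sqrt (4 * γ ^ 2 - s ^ 2))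
        (1 / (2 * Real.sqrt (4 * γ ^ 2 - s ^ 2)) * (8 * γ)) γ :=
      (Real.hasDerivAt_sqrt ht.ne').comp γ h1
    have h3 : HasDerivAt f (f' γ) γ := by
      have := h2.div_const 2
      refine this.congr_deriv ?_
      simp only [hf'_def]
      field_simp
      ring
    exact h3.hasDerivWithinAt
  have hg_cont : ContinuousOn g (f '' Ioi (s / 2)) := by
    apply Continuous.continuousOn
    fun_prop
  have hg1 : IntegrableOn g (f '' Ici (s / 2)) :=
    (((integrable_exp_neg_mul_sq one_pos).const_mul _)).integrableOn
  have hg2 : IntegrableOn (fun γ => (g ∘ f) γ * f' γ) (Ici (s / 2)) := by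
    rw [integrableOn_Ici_iff_integrableOn_Ioi]
    exact ((uncond_aux_integrable s hs).congr_fun hEq measurableSet_Ioi)
  rw [MeasureTheory.integral_comp_mul_deriv_Ioi hf_cont hft hff' hg_cont hg1 hg2]
  have hfs : f (s / 2) = 0 := by
    simp only [hf_def]
    rw [show 4 * (s / 2) ^ 2 - s ^ 2 = 0 by ring, Real.sqrt_zero, zero_div]
  rw [hfs]
  simp only [hg_def]
  rw [MeasureTheory.integral_const_mul, integral_gaussian_Ioi]
  have hπ : Real.sqrt π > 0 := Real.sqrt_pos.mpr pi_pos
  have hπ2 : Real.sqrt π ^ 2 = π := Real.sq_sqrt pi_pos.le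
  rw [div_one]
  field_simp
  linear_combination (4 : ℝ) * (Real.mul_self_sqrt pi_pos.le)
end
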